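/- Let V be a torsion-free additive commutative group equipped with a symmetric bilinear form B : V × V → ℤ, let n ≥ 1, let C, C' : Fin n → V be an A₂^n configuration in (V,B), and let M ∈ V satisfy 3 • M = Σ_{i} (C i + 2 • C' i). Let N be the subgroup of V generated by the C i and C' i, and let L be the subgroup generated by N together with M. Then the 2n elements C i, C' i are linearly independent over ℤ, M ∉ N, and N has index exactly 3 in L. -/

import Mathlib

/-- A 3-divisible `A₂^n` configuration in a torsion-free group generates
a sublattice `L` containing the configuration lattice `N ≅ A₂^n` with index 3. -/
theorem stmt9 (V : Type*) [AddCommGroup V] [NoZeroSMulDivisors ℤ V]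
    (B : V →+ V →+ ℤ)
    (hsymm : ∀ x y, B x y = B y x)
    (n : ℕ) (hn : 1 ≤ n)
    (C C' : Fin n → V)
    (hCC : ∀ i, B (C i) (C i) = -2)
    (hC'C' : ∀ i, B (C' i) (C' i) = -2)
    (hCC' : ∀ i, B (C i) (C' i) = 1)
    (hCij : ∀ i j, i ≠ j → B (C i) (C j) = 0)
    (hC'ij : ∀ i j, i ≠ j → B (C' i) (C' j) = 0)
    (hCC'ij : ∀ i j, i ≠ j → B (C i) (C' j) = 0)
    (M : V) (hM : 3 • M = ∑ i, (C i + 2 • C' i))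
    (N L : AddSubgroup V)
    (hN : N = AddSubgroup.closure (Set.range C ∪ Set.range C'))
    (hL : L = AddSubgroup.closure (insert M (Set.range C ∪ Set.range C'))) :
    LinearIndependent ℤ (Sum.elim C C') ∧ M ∉ N ∧ N.relIndex L = 3 := by
  haveI : NeZero n := ⟨by omega⟩
  have pair : ∀ (w : V) (g : Fin n ⊕ Fin n → ℤ),
      B (∑ i, g i • Sum.elim C C' i) w
        = ∑ i, g (Sum.inl i) * B (C i) w + ∑ i, g (Sum.inr i) * B (C' i) w := by
    intro w g
    rw [← AddMonoidHom.flip_apply, map_sum, Fintype.sum_sum_type]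
    simp only [Sum.elim_inl, Sum.elim_inr, map_zsmul, smul_eq_mul, AddMonoidHom.flip_apply]
  have hli : LinearIndependent ℤ (Sum.elim C C') := by
    rw [Fintype.linearIndependent_iff]
    intro g hg i
    have key : ∀ j : Fin n, -2 * g (Sum.inl j) + g (Sum.inr j) = 0 ∧
        g (Sum.inl j) + -2 * g (Sum.inr j) = 0 := by
      intro j
      constructor
      · have e : ∑ i, g (Sum.inl i) * B (C i) (C j)
            + ∑ i, g (Sum.inr i) * B (C' i) (C j) = 0 := by
          rw [← pair (C j) g, hg, map_zero, AddMonoidHom.zero_apply]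
        rw [Finset.sum_eq_single j (fun b _ hb => by rw [hCij b j hb, mul_zero])
              (by simp), Finset.sum_eq_single j
              (fun b _ hb => by rw [hsymm, hCC'ij j b (Ne.symm hb), mul_zero]) (by simp),
            hCC j, hsymm (C' j) (C j), hCC' j] at e
        linarith
      · have e : ∑ i, g (Sum.inl i) * B (C i) (C' j)
            + ∑ i, g (Sum.inr i) * B (C' i) (C' j) = 0 := by
          rw [← pair (C' j) g, hg, map_zero, AddMonoidHom.zero_apply]
        rw [Finset.sum_eq_single j (fun b _ hb => by rw [hCC'ij b j hb, mul_zero])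
              (by simp), Finset.sum_eq_single j
              (fun b _ hb => by rw [hC'ij b j hb, mul_zero]) (by simp),
            hCC' j, hC'C' j] at e
        linarith
    cases i with
    | inl j => have := key j; omega
    | inr j => have := key j; omega
  refine ⟨hli, ?_⟩
  set w : V := C 0 - C' 0 with hw
  have hBw : ∀ x, B x w = B x (C 0) - B x (C' 0) := by
    intro x; rw [hw, map_sub]
  set φ : V →+ ZMod 3 := (Int.castAddHom (ZMod 3)).comp (B.flip w) with hφ
  have hφeval : ∀ x, φ x = ((B x w : ℤ) : ZMod 3) := fun x => rfl
  have hφC : ∀ i, φ (C i) = 0 := by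
    intro i
    rw [hφeval, hBw]
    rcases eq_or_ne i 0 with h | h
    · subst h; rw [hCC 0, hCC' 0]; decide
    · rw [hCij i 0 h, hCC'ij i 0 h]; simp
  have hφC' : ∀ i, φ (C' i) = 0 := by
    intro i
    rw [hφeval, hBw]
    rcases eq_or_ne i 0 with h | h
    · subst h; rw [hsymm (C' 0) (C 0), hCC' 0, hC'C' 0]; decide
    · rw [hsymm (C' i) (C 0), hCC'ij 0 i (Ne.symm h), hsymm (C' i) (C' 0),
        hC'ij 0 i (Ne.symm h)]; simp
  have hφN : ∀ x ∈ N, φ x = 0 := by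
    intro x hx
    rw [hN] at hx
    have hle : AddSubgroup.closure (Set.range C ∪ Set.range C') ≤ φ.ker := by
      rw [AddSubgroup.closure_le]
      rintro y (⟨i, rfl⟩ | ⟨i, rfl⟩)
      · exact hφC i
      · exact hφC' i
    exact hle hx
  -- compute B M w = 1
  have hterm : ∀ i : Fin n, B (C i) w + 2 * B (C' i) w = if i = 0 then 3 else 0 := by
    intro i
    rw [hBw, hBw]
    rcases eq_or_ne i 0 with h | h
    · subst h
      rw [hCC 0, hCC' 0, hsymm (C' 0) (C 0), hCC' 0, hC'C' 0]
      norm_num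
    · rw [hCij i 0 h, hCC'ij i 0 h, hsymm (C' i) (C 0), hCC'ij 0 i (Ne.symm h),
        hsymm (C' i) (C' 0), hC'ij 0 i (Ne.symm h), if_neg h]
      norm_num
  have hBMw : B M w = 1 := by
    have e := congrArg (B.flip w) hM
    simp only [map_nsmul, map_sum, map_add, AddMonoidHom.flip_apply, nsmul_eq_mul,
      Nat.cast_ofNat] at e
    rw [Finset.sum_congr rfl (fun i _ => hterm i), Finset.sum_ite_eq' Finset.univ 0
      (fun _ => (3 : ℤ))] at e
    simp only [Finset.mem_univ, if_true] at e
    linarith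
  have hφM : φ M = 1 := by rw [hφeval, hBMw]; decide
  have hMN : M ∉ N := by
    intro h
    rw [hφN M h] at hφM
    exact absurd hφM (by decide)
  refine ⟨hMN, ?_⟩
  have h3M : (3 : ℤ) • M ∈ N := by
    have h3 : (3 : ℤ) • M = ∑ i, (C i + 2 • C' i) := by
      rw [show (3 : ℤ) = ((3 : ℕ) : ℤ) by norm_num, natCast_zsmul, hM]
    rw [h3, hN]
    refine sum_mem (fun i _ => ?_)
    have h1 : C i ∈ AddSubgroup.closure (Set.range C ∪ Set.range C') :=
      AddSubgroup.subset_closure (Set.mem_union_left _ ⟨i, rfl⟩)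
    have h2 : C' i ∈ AddSubgroup.closure (Set.range C ∪ Set.range C') :=
      AddSubgroup.subset_closure (Set.mem_union_right _ ⟨i, rfl⟩)
    exact add_mem h1 (nsmul_mem h2 2)
  have hML : M ∈ L := by
    rw [hL]; exact AddSubgroup.subset_closure (Set.mem_insert _ _)
  have hLdecomp : ∀ x ∈ L, ∃ (k : ℤ) (y : V), y ∈ N ∧ x = k • M + y := by
    intro x hx
    rw [hL, Set.insert_eq, AddSubgroup.closure_union, AddSubgroup.mem_sup] at hx
    obtain ⟨y, hy, z, hz, rfl⟩ := hx
    rw [AddSubgroup.mem_closure_singleton] at hy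
    obtain ⟨k, rfl⟩ := hy
    exact ⟨k, z, hN ▸ hz, rfl⟩
  set ψ : L →+ ZMod 3 := φ.comp L.subtype with hψ
  have hker : ψ.ker = N.addSubgroupOf L := by
    ext ⟨x, hx⟩
    simp only [AddMonoidHom.mem_ker, hψ, AddMonoidHom.comp_apply, AddSubgroup.coe_subtype,
      AddSubgroup.mem_addSubgroupOf]
    constructor
    · intro h
      obtain ⟨k, y, hyN, rfl⟩ := hLdecomp x hx
      rw [map_add, hφN y hyN, add_zero, map_zsmul, hφM] at h
      have hk : ((k : ℤ) : ZMod 3) = 0 := by rw [← h]; simp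
      rw [ZMod.intCast_zmod_eq_zero_iff_dvd] at hk
      obtain ⟨m, rfl⟩ := hk
      have hrw : (((3 : ℕ) : ℤ) * m) • M = m • ((3 : ℤ) • M) := by
        rw [mul_comm, mul_smul]
        norm_num
      rw [hrw]
      exact add_mem (zsmul_mem h3M m) hyN
    · intro h
      exact hφN x h
  have hsurj : Function.Surjective ψ := by
    intro c
    refine ⟨(c.val : ℤ) • ⟨M, hML⟩, ?_⟩
    rw [hψ]
    simp only [map_zsmul, AddMonoidHom.comp_apply, AddSubgroup.coe_subtype]
    rw [hφM]
    simp [ZMod.natCast_val, ZMod.cast_id]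
  show (N.addSubgroupOf L).index = 3
  rw [← hker, AddSubgroup.index_ker, AddMonoidHom.range_eq_top.mpr hsurj]
  rw [Nat.card_congr AddSubgroup.topEquiv.toEquiv]
  simp [Nat.card_eq_fintype_card]
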